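/- Cycles are compact: for n ≥ 3, let A be the adjacency matrix of the cycle graph on n vertices (vertices i and j of Fin n adjacent iff they differ by 1 modulo n). Then every doubly stochastic n×n real matrix X satisfying X * A = A * X lies in the convex hull of the set of permutation matrices P_σ where σ ranges over the automorphisms of the cycle graph. -/

import Mathlib

open Matrix Finset

/-- The permutation matrix of `σ`: entry `i j` is `1` if `σ j = i`, else `0`. -/
def permMatrix (n : ℕ) (σ : Equiv.Perm (Fin n)) : Matrix (Fin n) (Fin n) ℝ :=
  fun i j => if σ j = i then 1 else 0

/-- A matrix is doubly stochastic if it has nonnegative entries and all its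
row sums and column sums equal `1`. -/
def IsDoublyStochastic {n : ℕ} (X : Matrix (Fin n) (Fin n) ℝ) : Prop :=
  (∀ i j, 0 ≤ X i j) ∧ (∀ i, ∑ j, X i j = 1) ∧ (∀ j, ∑ i, X i j = 1)

/-- The cycle graph on `n` vertices: `i` and `j` are adjacent iff they differ
by `1` modulo `n`. -/
def cycleGraph (n : ℕ) : SimpleGraph (Fin n) :=
  SimpleGraph.fromRel (fun i j => ((i : ZMod n) + 1 = (j : ZMod n)))

instance (n : ℕ) : DecidableRel (cycleGraph n).Adj := fun i j =>
  inferInstanceAs (Decidable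
    (i ≠ j ∧ (((i : ZMod n) + 1 = (j : ZMod n)) ∨ ((j : ZMod n) + 1 = (i : ZMod n)))))

open scoped Fin.CommRing Fin.NatCast

section Aux

variable {n : ℕ} [NeZero n]

private lemma cg_val_one (hn : 3 ≤ n) : (1 : Fin n).val = 1 := by
  rw [Fin.val_one']; exact Nat.mod_eq_of_lt (by omega)

private lemma cg_adj_iff (hn : 3 ≤ n) (i j : Fin n) :
    (cycleGraph n).Adj i j ↔ i ≠ j ∧ (i + 1 = j ∨ j + 1 = i) := by
  have key : ∀ a b : Fin n, ((a : ZMod n) + 1 = (b : ZMod n)) ↔ a + 1 = b := by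
    intro a b
    have h1 : ((a : ZMod n) + 1) = (((a : ℕ) + 1 : ℕ) : ZMod n) := by push_cast; ring
    rw [h1, ZMod.natCast_eq_natCast_iff]
    unfold Nat.ModEq
    rw [Fin.ext_iff, Fin.val_add, cg_val_one hn, Nat.mod_eq_of_lt b.isLt]
  rw [cycleGraph, SimpleGraph.fromRel_adj, key, key]

private lemma cg_nbr (hn : 3 ≤ n) (j : Fin n) :
    (cycleGraph n).neighborFinset j = {j - 1, j + 1} := by
  ext k
  rw [SimpleGraph.mem_neighborFinset, cg_adj_iff hn, mem_insert, mem_singleton]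
  constructor
  · rintro ⟨hne, h | h⟩
    · right; exact h.symm
    · left; exact (eq_sub_iff_add_eq.mpr h)
  · have h10 : (1 : Fin n) ≠ 0 := by
      intro h; have := congrArg Fin.val h
      rw [cg_val_one hn, Fin.val_zero] at this; omega
    rintro (rfl | rfl)
    · refine ⟨fun h => ?_, Or.inr (sub_add_cancel j 1)⟩
      have h2 : j + 1 = j := by
        conv_lhs => rw [h]
        exact sub_add_cancel j 1
      exact h10 (add_eq_left.mp h2)
    · exact ⟨fun h => h10 (left_eq_add.mp h), Or.inl rfl⟩

private lemma cg_wave (hn : 3 ≤ n) (X : Matrix (Fin n) (Fin n) ℝ)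
    (hcomm : X * (cycleGraph n).adjMatrix ℝ = (cycleGraph n).adjMatrix ℝ * X) (i j : Fin n) :
    X i (j - 1) + X i (j + 1) = X (i - 1) j + X (i + 1) j := by
  have h := congrFun (congrFun hcomm i) j
  rw [SimpleGraph.mul_adjMatrix_apply, SimpleGraph.adjMatrix_mul_apply, cg_nbr hn, cg_nbr hn] at h
  have hne : ∀ a : Fin n, a - 1 ≠ a + 1 := by
    intro a h'
    have h2 : a = a + (1 + 1) := by
      have := congrArg (· + (1 : Fin n)) h'
      simpa [sub_add_cancel, add_assoc] using this
    have h3 : ((1 : Fin n) + 1) = 0 := (left_eq_add.mp h2)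
    have := congrArg Fin.val h3
    rw [Fin.val_add, cg_val_one hn, Fin.val_zero, Nat.mod_eq_of_lt (by omega)] at this
    omega
  rw [Finset.sum_pair (hne j), Finset.sum_pair (hne i)] at h
  exact h

private lemma cg_antidiag (hn : 3 ≤ n) (X : Matrix (Fin n) (Fin n) ℝ)
    (hW : ∀ i j : Fin n, X i (j - 1) + X i (j + 1) = X (i - 1) j + X (i + 1) j)
    {i j i' j' : Fin n} (h : i + j = i' + j') :
    X (i + 1) (j + 1) - X i j = X (i' + 1) (j' + 1) - X i' j' := by
  have step : ∀ a b : Fin n,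
      X (a + 1) (b + 1) - X a b = X ((a - 1) + 1) ((b + 1) + 1) - X (a - 1) (b + 1) := by
    intro a b
    have h1 := hW a (b + 1)
    rw [show b + 1 - 1 = b by ring] at h1
    rw [show (a - 1) + 1 = a by ring]
    linarith
  have iter : ∀ (k : ℕ) (i j : Fin n),
      X (i + 1) (j + 1) - X i j
        = X ((i - (k : Fin n)) + 1) ((j + (k : Fin n)) + 1) - X (i - (k : Fin n)) (j + (k : Fin n)) := by
    intro k
    induction k with
    | zero => intro i j; simp
    | succ m ih =>
      intro i j
      have h1 := ih i j
      have h2 := step (i - (m : Fin n)) (j + (m : Fin n))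
      rw [show ((m + 1 : ℕ) : Fin n) = (m : Fin n) + 1 by push_cast; ring,
        show i - ((m : Fin n) + 1) = (i - (m : Fin n)) - 1 by ring,
        show j + ((m : Fin n) + 1) = (j + (m : Fin n)) + 1 by ring]
      exact h1.trans h2
  have hk : (((i - i').val : ℕ) : Fin n) = i - i' := Fin.cast_val_eq_self _
  have h1 := iter (i - i').val i j
  rw [hk, show i - (i - i') = i' by ring, show j + (i - i') = j' by linear_combination h] at h1
  exact h1

private lemma cg_telescope (hn : 3 ≤ n) (X : Matrix (Fin n) (Fin n) ℝ) :
    ∀ (m : ℕ) (i j : Fin n),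
      X (i + (m : Fin n)) (j + (m : Fin n)) - X i j
        = ∑ k ∈ Finset.range m,
            (X (i + (k : Fin n) + 1) (j + (k : Fin n) + 1) - X (i + (k : Fin n)) (j + (k : Fin n))) := by
  intro m
  induction m with
  | zero => intro i j; simp
  | succ m ih =>
    intro i j
    rw [Finset.sum_range_succ, ← ih i j,
      show ((m + 1 : ℕ) : Fin n) = (m : Fin n) + 1 by push_cast; ring,
      show i + ((m : Fin n) + 1) = i + (m : Fin n) + 1 by ring,
      show j + ((m : Fin n) + 1) = j + (m : Fin n) + 1 by ring]
    ring

private lemma cg_rect (hn : 3 ≤ n) (X : Matrix (Fin n) (Fin n) ℝ)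
    (hW : ∀ i j : Fin n, X i (j - 1) + X i (j + 1) = X (i - 1) j + X (i + 1) j)
    (i j s t : Fin n) :
    X i j + X (i + s + t) (j + s - t) = X (i + t) (j - t) + X (i + s) (j + s) := by
  have hs : ((s.val : ℕ) : Fin n) = s := Fin.cast_val_eq_self s
  have h1 := cg_telescope hn X s.val i j
  have h2 := cg_telescope hn X s.val (i + t) (j - t)
  rw [hs] at h1 h2
  have hsum : (∑ k ∈ Finset.range s.val,
      (X (i + t + (k : Fin n) + 1) (j - t + (k : Fin n) + 1) - X (i + t + (k : Fin n)) (j - t + (k : Fin n))))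
      = ∑ k ∈ Finset.range s.val,
      (X (i + (k : Fin n) + 1) (j + (k : Fin n) + 1) - X (i + (k : Fin n)) (j + (k : Fin n))) := by
    refine Finset.sum_congr rfl fun k _ => ?_
    exact cg_antidiag hn X hW (by ring)
  rw [hsum, ← h1] at h2
  rw [show i + t + s = i + s + t by ring, show j - t + s = j + s - t by ring] at h2
  linarith

end Aux

/-- Cycles are compact: for `n ≥ 3`, every doubly stochastic matrix commuting
with the adjacency matrix of the cycle graph lies in the convex hull of the
permutation matrices of its automorphisms. -/
theorem cycleGraph_compact (n : ℕ) (hn : 3 ≤ n) (X : Matrix (Fin n) (Fin n) ℝ)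
    (hX : IsDoublyStochastic X)
    (hcomm : X * (cycleGraph n).adjMatrix ℝ = (cycleGraph n).adjMatrix ℝ * X) :
    X ∈ convexHull ℝ {M : Matrix (Fin n) (Fin n) ℝ |
      ∃ σ : Equiv.Perm (Fin n),
        (∀ u v : Fin n, (cycleGraph n).Adj u v ↔ (cycleGraph n).Adj (σ u) (σ v)) ∧
        M = permMatrix n σ} := by
  have hNZ : NeZero n := ⟨by omega⟩
  obtain ⟨hpos, hrow, hcol⟩ := hX
  have hW : ∀ i j : Fin n, X i (j - 1) + X i (j + 1) = X (i - 1) j + X (i + 1) j :=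
    cg_wave hn X hcomm
  have hne : (univ : Finset (Fin n)).Nonempty := ⟨⟨0, by omega⟩, mem_univ _⟩
  set b : Fin n → ℝ := fun d => univ.inf' hne (fun j => X (j + d) j) with hbdef
  set a : Fin n → ℝ := fun c => X c 0 - b c with hadef
  -- the value X (j+d) j - X (j+d+t) (j-t) does not depend on j
  have hdiag : ∀ d t j : Fin n,
      X (j + d) j - X (j + d + t) (j - t) = X d 0 - X (d + t) (0 - t) := by
    intro d t j
    have h := cg_rect hn X hW d 0 j t
    rw [show d + j + t = j + d + t by ring, show (0 : Fin n) + j - t = j - t by ring,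
      show d + j = j + d by ring, show (0 : Fin n) + j = j by ring] at h
    linarith
  have hbshift : ∀ d t : Fin n, b (d + t + t) = b d - (X d 0 - X (d + t) (0 - t)) := by
    intro d t
    apply le_antisymm
    · obtain ⟨j0, -, hj0⟩ := Finset.exists_mem_eq_inf' hne (fun j => X (j + d) j)
      have hle : b (d + t + t) ≤ X ((j0 - t) + (d + t + t)) (j0 - t) :=
        Finset.inf'_le _ (mem_univ _)
      rw [show (j0 - t) + (d + t + t) = j0 + d + t by ring] at hle
      have h := hdiag d t j0
      have hbd : b d = X (j0 + d) j0 := hj0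
      linarith [hle, h, hbd]
    · obtain ⟨j1, -, hj1⟩ := Finset.exists_mem_eq_inf' hne (fun j => X (j + (d + t + t)) j)
      have h2 := hdiag d t (j1 + t)
      have hle : b d ≤ X ((j1 + t) + d) (j1 + t) := Finset.inf'_le _ (mem_univ _)
      rw [show (j1 + t) + d + t = j1 + (d + t + t) by ring, show j1 + t - t = j1 by ring] at h2
      have hb1 : b (d + t + t) = X (j1 + (d + t + t)) j1 := hj1
      rw [hb1]
      linarith
  have hmain : ∀ i j : Fin n, X i j = a (i + j) + b (i - j) := by
    intro i j
    have h1 := hdiag (i - j) j j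
    rw [show j + (i - j) + j = i + j by ring, show j + (i - j) = i by ring,
      show j - j = (0 : Fin n) by ring, show (i - j) + j = i by ring] at h1
    have h2 := hbshift (i - j) j
    rw [show i - j + j + j = i + j by ring, show (i - j) + j = i by ring] at h2
    show X i j = (X (i + j) 0 - b (i + j)) + b (i - j)
    linarith
  have hbnn : ∀ d, 0 ≤ b d := fun d => Finset.le_inf' _ _ fun j _ => hpos _ _
  have hann : ∀ c, 0 ≤ a c := by
    intro c
    have h := Finset.inf'_le (s := (univ : Finset (Fin n))) (fun j => X (j + c) j)
      (mem_univ (0 : Fin n))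
    rw [show (0 : Fin n) + c = c by ring] at h
    rw [hadef]; simp only
    rw [hbdef]; simp only
    linarith
  have hsum : ∑ c, a c + ∑ d, b d = 1 := by
    have h1 : ∑ c, a c = ∑ c, X c 0 - ∑ c, b c := by
      rw [hadef]; simp only
      exact Finset.sum_sub_distrib _ _
    rw [h1]
    have := hcol 0
    linarith
  -- the automorphisms
  have hrotAut : ∀ d : Fin n, ∀ u v : Fin n,
      (cycleGraph n).Adj u v ↔ (cycleGraph n).Adj (Equiv.addRight d u) (Equiv.addRight d v) := by
    intro d u v
    simp only [Equiv.coe_addRight]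
    rw [cg_adj_iff hn, cg_adj_iff hn, ne_eq, ne_eq, add_left_inj,
      show (u + d + 1 = v + d) ↔ (u + 1 = v) by rw [add_right_comm]; exact add_left_inj d,
      show (v + d + 1 = u + d) ↔ (v + 1 = u) by rw [add_right_comm]; exact add_left_inj d]
  have hrefAut : ∀ c : Fin n, ∀ u v : Fin n,
      (cycleGraph n).Adj u v ↔ (cycleGraph n).Adj (Equiv.subLeft c u) (Equiv.subLeft c v) := by
    intro c u v
    simp only [Equiv.subLeft_apply]
    rw [cg_adj_iff hn, cg_adj_iff hn, ne_eq, ne_eq, sub_right_inj,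
      show (c - u + 1 = c - v) ↔ (v + 1 = u) by
        constructor <;> intro h <;> linear_combination h,
      show (c - v + 1 = c - u) ↔ (u + 1 = v) by
        constructor <;> intro h <;> linear_combination h]
    tauto
  -- permutation matrix entries
  have hrotM : ∀ d i j : Fin n,
      permMatrix n (Equiv.addRight d) i j = if i - j = d then (1 : ℝ) else 0 := by
    intro d i j
    unfold permMatrix
    simp only [Equiv.coe_addRight]
    exact if_congr (by constructor <;> intro h <;> linear_combination -h) rfl rfl
  have hrefM : ∀ c i j : Fin n,
      permMatrix n (Equiv.subLeft c) i j = if i + j = c then (1 : ℝ) else 0 := by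
    intro c i j
    unfold permMatrix
    simp only [Equiv.subLeft_apply]
    exact if_congr (by constructor <;> intro h <;> linear_combination -h) rfl rfl
  -- assemble the convex combination
  set w : Fin n ⊕ Fin n → ℝ := Sum.elim a b with hwdef
  set z : Fin n ⊕ Fin n → Matrix (Fin n) (Fin n) ℝ :=
    Sum.elim (fun c => permMatrix n (Equiv.subLeft c)) (fun d => permMatrix n (Equiv.addRight d))
    with hzdef
  have hw1 : ∑ p, w p = 1 := by
    rw [hwdef, Fintype.sum_sum_type]
    simpa using hsum
  have hXeq : X = ∑ p, w p • z p := by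
    ext i j
    rw [Matrix.sum_apply, Fintype.sum_sum_type]
    simp only [hwdef, hzdef, Sum.elim_inl, Sum.elim_inr, Matrix.smul_apply, hrefM, hrotM,
      smul_eq_mul, mul_ite, mul_one, mul_zero]
    have e1 : (∑ c : Fin n, if i + j = c then a c else 0) = a (i + j) := by
      rw [Finset.sum_ite_eq]; simp
    have e2 : (∑ d : Fin n, if i - j = d then b d else 0) = b (i - j) := by
      rw [Finset.sum_ite_eq]; simp
    rw [e1, e2]
    exact hmain i j
  rw [hXeq, ← Finset.centerMass_eq_of_sum_1 univ z hw1]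
  refine Finset.centerMass_mem_convexHull _ (fun p _ => ?_) (by rw [hw1]; norm_num) (fun p _ => ?_)
  · rcases p with c | d
    · exact hann c
    · exact hbnn d
  · rcases p with c | d
    · exact ⟨Equiv.subLeft c, hrefAut c, rfl⟩
    · exact ⟨Equiv.addRight d, hrotAut d, rfl⟩
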